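/- Let f, g : ℝ → ℝ be continuous with g locally Lipschitz, let F(x) = ∫₀ˣ f(u) du, and suppose F and g are odd with g(x) > 0 for x > 0. Then the image of every nonconstant periodic solution of the Lienard system ẋ = y − F(x), ẏ = −g(x) is symmetric about the origin: a point (p, q) lies on the orbit if and only if (−p, −q) lies on the orbit. -/

import Mathlib

open Set Filter Topology

/-- A solution of the Lienard system `ẋ = y - F x`, `ẏ = -g x`. -/
def IsSolution (F g : ℝ → ℝ) (x y : ℝ → ℝ) : Prop :=
  ∀ t : ℝ, HasDerivAt x (y t - F (x t)) t ∧ HasDerivAt y (-(g (x t))) t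


lemma ode_unique {E : Type*} [NormedAddCommGroup E] [NormedSpace ℝ E] {v : E → E}
    (hv : LocallyLipschitz v) {γ₁ γ₂ : ℝ → E}
    (h₁ : ∀ t, HasDerivAt γ₁ (v (γ₁ t)) t) (h₂ : ∀ t, HasDerivAt γ₂ (v (γ₂ t)) t)
    {t₀ : ℝ} (heq : γ₁ t₀ = γ₂ t₀) : ∀ t, γ₁ t = γ₂ t := by
  have hc₁ : Continuous γ₁ := continuous_iff_continuousAt.2 fun t => (h₁ t).continuousAt
  have hc₂ : Continuous γ₂ := continuous_iff_continuousAt.2 fun t => (h₂ t).continuousAt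
  have hS : IsClopen {t | γ₁ t = γ₂ t} := by
    constructor
    · exact isClosed_eq hc₁ hc₂
    · rw [isOpen_iff_mem_nhds]
      intro s hs
      have hs' : γ₁ s = γ₂ s := hs
      obtain ⟨K, U, hU, hK⟩ := hv (γ₁ s)
      have hU₂ : U ∈ 𝓝 (γ₂ s) := hs' ▸ hU
      have hf : ∀ᶠ t in 𝓝 s, HasDerivAt γ₁ (v (γ₁ t)) t ∧ γ₁ t ∈ U := by
        filter_upwards [hc₁.continuousAt.preimage_mem_nhds hU] with t ht
        exact ⟨h₁ t, ht⟩
      have hg : ∀ᶠ t in 𝓝 s, HasDerivAt γ₂ (v (γ₂ t)) t ∧ γ₂ t ∈ U := by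
        filter_upwards [hc₂.continuousAt.preimage_mem_nhds hU₂] with t ht
        exact ⟨h₂ t, ht⟩
      have := ODE_solution_unique_of_eventually (v := fun _ => v) (s := fun _ => U)
        (Filter.Eventually.of_forall fun _ => hK) hf hg hs'
      exact this.mono fun t ht => ht
  intro t
  have : {t | γ₁ t = γ₂ t} = univ :=
    (isClopen_iff.1 hS).resolve_left (fun h => by simpa [h] using (mem_setOf.2 heq : t₀ ∈ {t | γ₁ t = γ₂ t}))
  have ht : t ∈ {t | γ₁ t = γ₂ t} := this ▸ mem_univ t
  exact ht

lemma inv_mono {h : ℝ → ℝ} {a b : ℝ} (hab : a ≤ b) (hc : ContinuousOn h (Icc a b))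
    (hm : StrictMonoOn h (Icc a b)) :
    ∃ σ : ℝ → ℝ, ContinuousOn σ (Icc (h a) (h b)) ∧
      MapsTo σ (Icc (h a) (h b)) (Icc a b) ∧ ∀ r ∈ Icc (h a) (h b), h (σ r) = r := by
  have hane : (Icc a b).Nonempty := nonempty_Icc.2 hab
  have hmem : ∀ t ∈ Icc a b, h t ∈ Icc (h a) (h b) := fun t ht =>
    ⟨hm.monotoneOn (left_mem_Icc.2 hab) ht ht.1, hm.monotoneOn ht (right_mem_Icc.2 hab) ht.2⟩
  -- forward map between subtypes
  set A := Icc a b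
  set B := Icc (h a) (h b)
  have hsurj : ∀ r ∈ B, ∃ t ∈ A, h t = r := by
    intro r hr
    have := intermediate_value_Icc hab hc hr
    obtain ⟨t, ht, h'⟩ := this
    exact ⟨t, ht, h'⟩
  let e : A → B := fun t => ⟨h t, hmem t t.2⟩
  have hbij : Function.Bijective e := by
    constructor
    · intro s t hst
      exact Subtype.ext (hm.injOn s.2 t.2 (congrArg Subtype.val hst))
    · rintro ⟨r, hr⟩
      obtain ⟨t, ht, h'⟩ := hsurj r hr
      exact ⟨⟨t, ht⟩, Subtype.ext h'⟩
  have hce : Continuous e := Continuous.subtype_mk (hc.restrict) _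
  let E : A ≃ B := Equiv.ofBijective e hbij
  have hcE : Continuous E := hce
  let H : A ≃ₜ B := Continuous.homeoOfEquivCompactToT2 (f := E) hcE
  classical
  refine ⟨fun r => if hr : r ∈ B then (H.symm ⟨r, hr⟩ : ℝ) else a, ?_, ?_, ?_⟩
  · rw [continuousOn_iff_continuous_domRestrict]
    have : (B.domRestrict fun r => if hr : r ∈ B then (H.symm ⟨r, hr⟩ : ℝ) else a)
        = fun r : B => (H.symm r : ℝ) := by
      funext r
      simp [Set.domRestrict, r.2]
    rw [this]
    exact continuous_subtype_val.comp H.symm.continuous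
  · intro r hr
    simp only [hr, dif_pos]
    exact (H.symm ⟨r, hr⟩).2
  · intro r hr
    simp only [hr, dif_pos]
    have : e (H.symm ⟨r, hr⟩) = ⟨r, hr⟩ := H.apply_symm_apply ⟨r, hr⟩
    exact congrArg Subtype.val this

lemma cross {x y : ℝ → ℝ} (hx : Continuous x) (hy : Continuous y)
    {a b p q : ℝ} (hab : a ≤ b) (hpq : p ≤ q)
    (hxa : x a = 0) (hxb : x b = 0) (hxp : x p = 0) (hxq : x q = 0)
    (hxR : ∀ t ∈ Icc a b, 0 ≤ x t) (hxL : ∀ t ∈ Icc p q, x t ≤ 0)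
    (hyR : StrictAntiOn y (Icc a b)) (hyL : StrictMonoOn y (Icc p q))
    (hu : 0 < y a) (hv : y b < 0) (hw : y p < 0) (hz : 0 < y q)
    (hgood : 0 ≤ (y a + y p) * (y b + y q)) :
    ∃ t s, x t = -x s ∧ y t = -y s := by
  obtain ⟨σR, hσRc, hσRm, hσRe⟩ := inv_mono (h := fun t => -y t) hab
    (hy.neg.continuousOn) (fun s hs t ht hst => neg_lt_neg (hyR hs ht hst))
  obtain ⟨σL, hσLc, hσLm, hσLe⟩ := inv_mono (h := y) hpq (hy.continuousOn) hyL
  set u := y a with hu'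
  set v := y b with hv'
  set w := y p with hw'
  set z := y q with hz'
  -- key extraction
  have key : ∀ r, -r ∈ Icc (-u) (-v) → -r ∈ Icc w z →
      x (σR (-r)) + x (σL (-r)) = 0 → ∃ t s, x t = -x s ∧ y t = -y s := by
    intro r hr hr' hDr
    refine ⟨σR (-r), σL (-r), by linarith, ?_⟩
    have h1 : -y (σR (-r)) = -r := hσRe (-r) hr
    have h2 : y (σL (-r)) = -r := hσLe (-r) hr'
    linarith
  set D : ℝ → ℝ := fun r => x (σR (-r)) + x (σL (-r)) with hDdef
  have hDc : ∀ I : Set ℝ, (∀ r ∈ I, -r ∈ Icc (-u) (-v)) → (∀ r ∈ I, -r ∈ Icc w z) →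
      ContinuousOn D I := by
    intro I hI1 hI2
    apply ContinuousOn.add
    · exact hx.comp_continuousOn <| hσRc.comp (continuousOn_neg) hI1
    · exact hx.comp_continuousOn <| hσLc.comp (continuousOn_neg) hI2
  -- identities at special points
  have hRtop : σR (-u) = a := by
    have hm : -u ∈ Icc (-u) (-v) := ⟨le_rfl, by linarith⟩
    have := hσRe (-u) hm
    exact hyR.injOn (hσRm hm) (left_mem_Icc.2 hab) (by linarith)
  have hRbot : σR (-v) = b := by
    have hm : -v ∈ Icc (-u) (-v) := ⟨by linarith, le_rfl⟩
    have := hσRe (-v) hm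
    exact hyR.injOn (hσRm hm) (right_mem_Icc.2 hab) (by linarith)
  have hLbot : σL w = p := by
    have hm : w ∈ Icc w z := ⟨le_rfl, by linarith⟩
    have := hσLe w hm
    exact hyL.injOn (hσLm hm) (left_mem_Icc.2 hpq) this
  have hLtop : σL z = q := by
    have hm : z ∈ Icc w z := ⟨by linarith, le_rfl⟩
    have := hσLe z hm
    exact hyL.injOn (hσLm hm) (right_mem_Icc.2 hpq) this
  rcases (mul_nonneg_iff.1 hgood) with ⟨h1, h2⟩ | ⟨h1, h2⟩
  · -- u + w ≥ 0, v + z ≥ 0 : interval [v, -w]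
    have hle : v ≤ -w := by linarith
    have m1 : ∀ r ∈ Icc v (-w), -r ∈ Icc (-u) (-v) := fun r hr => ⟨by linarith [hr.2], by linarith [hr.1]⟩
    have m2 : ∀ r ∈ Icc v (-w), -r ∈ Icc w z := fun r hr => ⟨by linarith [hr.2], by linarith [hr.1]⟩
    have hDlo : D v ≤ 0 := by
      have : σR (-v) = b := hRbot
      have hmem : σL (-v) ∈ Icc p q := hσLm (m2 v ⟨le_rfl, hle⟩)
      simp only [hDdef, this, hxb]
      simpa using hxL _ hmem
    have hDhi : 0 ≤ D (-w) := by
      have h' : σL (-(-w)) = p := by rw [neg_neg]; exact hLbot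
      have hmem : σR (-(-w)) ∈ Icc a b := hσRm (m1 (-w) ⟨hle, le_rfl⟩)
      simp only [hDdef, h', hxp]
      simpa using hxR _ hmem
    have := intermediate_value_Icc hle (hDc _ m1 m2) ⟨hDlo, hDhi⟩
    obtain ⟨r, hrI, hDr⟩ := this
    exact key r (m1 r hrI) (m2 r hrI) hDr
  · -- u + w ≤ 0, v + z ≤ 0 : interval [-z, u]
    have hle : -z ≤ u := by linarith
    have m1 : ∀ r ∈ Icc (-z) u, -r ∈ Icc (-u) (-v) := fun r hr => ⟨by linarith [hr.2], by linarith [hr.1]⟩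
    have m2 : ∀ r ∈ Icc (-z) u, -r ∈ Icc w z := fun r hr => ⟨by linarith [hr.2], by linarith [hr.1]⟩
    have hDlo : 0 ≤ D (-z) := by
      have h' : σL (-(-z)) = q := by rw [neg_neg]; exact hLtop
      have hmem : σR (-(-z)) ∈ Icc a b := hσRm (m1 (-z) ⟨le_rfl, hle⟩)
      simp only [hDdef, h', hxq]
      simpa using hxR _ hmem
    have hDhi : D u ≤ 0 := by
      have : σR (-u) = a := hRtop
      have hmem : σL (-u) ∈ Icc p q := hσLm (m2 u ⟨hle, le_rfl⟩)
      simp only [hDdef, this, hxa]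
      simpa using hxL _ hmem
    have := intermediate_value_Icc' hle (hDc _ m1 m2) ⟨hDhi, hDlo⟩
    obtain ⟨r, hrI, hDr⟩ := this
    exact key r (m1 r hrI) (m2 r hrI) hDr

lemma slope_tendsto_right {x : ℝ → ℝ} {d u : ℝ} (hx : HasDerivAt x d u) :
    Tendsto (slope x u) (𝓝[>] u) (𝓝 d) :=
  (hasDerivAt_iff_tendsto_slope.1 hx).mono_left (nhdsWithin_mono _ (fun t ht => ne_of_gt ht))

lemma slope_tendsto_left {x : ℝ → ℝ} {d u : ℝ} (hx : HasDerivAt x d u) :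
    Tendsto (slope x u) (𝓝[<] u) (𝓝 d) :=
  (hasDerivAt_iff_tendsto_slope.1 hx).mono_left (nhdsWithin_mono _ (fun t ht => ne_of_lt ht))

-- derivative sign from values on the right
lemma deriv_nonneg_of_right {x : ℝ → ℝ} {d u b : ℝ} (hx : HasDerivAt x d u) (hub : u < b)
    (h0 : x u = 0) (hpos : ∀ t ∈ Ioc u b, 0 ≤ x t) : 0 ≤ d := by
  refine ge_of_tendsto (slope_tendsto_right hx) ?_
  filter_upwards [Ioc_mem_nhdsGT_of_mem ⟨le_rfl, hub⟩, self_mem_nhdsWithin] with t ht ht'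
  rw [slope_def_field, h0, sub_zero]
  exact div_nonneg (hpos t ht) (sub_pos.2 ht').le

-- derivative sign from nonneg values on the left
lemma deriv_nonpos_of_left {x : ℝ → ℝ} {d u c : ℝ} (hx : HasDerivAt x d u) (hcu : c < u)
    (h0 : x u = 0) (hpos : ∀ t ∈ Ico c u, 0 ≤ x t) : d ≤ 0 := by
  refine le_of_tendsto (slope_tendsto_left hx) ?_
  filter_upwards [Ico_mem_nhdsLT_of_mem ⟨hcu, le_rfl⟩, self_mem_nhdsWithin] with t ht ht'
  rw [slope_def_field, h0, sub_zero]
  exact div_nonpos_of_nonneg_of_nonpos (hpos t ht) (sub_nonpos.2 (le_of_lt ht'))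

lemma deriv_nonpos_of_right {x : ℝ → ℝ} {d u b : ℝ} (hx : HasDerivAt x d u) (hub : u < b)
    (h0 : x u = 0) (hneg : ∀ t ∈ Ioc u b, x t ≤ 0) : d ≤ 0 := by
  have := deriv_nonneg_of_right (x := fun t => -x t) hx.neg hub (by simp [h0])
    (fun t ht => by simpa using hneg t ht)
  linarith

lemma deriv_nonneg_of_left {x : ℝ → ℝ} {d u c : ℝ} (hx : HasDerivAt x d u) (hcu : c < u)
    (h0 : x u = 0) (hneg : ∀ t ∈ Ico c u, x t ≤ 0) : 0 ≤ d := by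
  have := deriv_nonpos_of_left (x := fun t => -x t) hx.neg hcu (by simp [h0])
    (fun t ht => by simpa using hneg t ht)
  linarith

-- existence of strict sign points near a simple zero
lemma exists_pos_right {x : ℝ → ℝ} {d u b : ℝ} (hx : HasDerivAt x d u) (hd : 0 < d)
    (h0 : x u = 0) (hub : u < b) : ∃ t ∈ Ioo u b, 0 < x t := by
  have h1 : ∀ᶠ t in 𝓝[>] u, 0 < slope x u t :=
    (slope_tendsto_right hx).eventually (eventually_gt_nhds hd)
  have h2 : Ioo u b ∈ 𝓝[>] u := Ioo_mem_nhdsGT_of_mem ⟨le_rfl, hub⟩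
  obtain ⟨t, hts, htI⟩ := (h1.and h2).exists
  refine ⟨t, htI, ?_⟩
  have h3 : (0:ℝ) < t - u := sub_pos.2 htI.1
  rw [slope_def_field, h0, sub_zero] at hts
  have := mul_pos hts h3
  rw [div_mul_cancel₀] at this
  · exact this
  · exact ne_of_gt h3

lemma exists_neg_left {x : ℝ → ℝ} {d u c : ℝ} (hx : HasDerivAt x d u) (hd : 0 < d)
    (h0 : x u = 0) (hcu : c < u) : ∃ t ∈ Ioo c u, x t < 0 := by
  have h1 : ∀ᶠ t in 𝓝[<] u, 0 < slope x u t :=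
    (slope_tendsto_left hx).eventually (eventually_gt_nhds hd)
  have h2 : Ioo c u ∈ 𝓝[<] u := Ioo_mem_nhdsLT_of_mem ⟨hcu, le_rfl⟩
  obtain ⟨t, hts, htI⟩ := (h1.and h2).exists
  refine ⟨t, htI, ?_⟩
  have h3 : t - u < 0 := sub_neg.2 htI.2
  rw [slope_def_field, h0, sub_zero] at hts
  have := mul_neg_of_pos_of_neg hts h3
  rwa [div_mul_cancel₀ _ (ne_of_lt h3)] at this

lemma exists_neg_right {x : ℝ → ℝ} {d u b : ℝ} (hx : HasDerivAt x d u) (hd : d < 0)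
    (h0 : x u = 0) (hub : u < b) : ∃ t ∈ Ioo u b, x t < 0 := by
  obtain ⟨t, ht, h⟩ := exists_pos_right (x := fun t => -x t) hx.neg (by linarith) (by simp [h0]) hub
  exact ⟨t, ht, by linarith [h]⟩

lemma exists_pos_left {x : ℝ → ℝ} {d u c : ℝ} (hx : HasDerivAt x d u) (hd : d < 0)
    (h0 : x u = 0) (hcu : c < u) : ∃ t ∈ Ioo c u, 0 < x t := by
  obtain ⟨t, ht, h⟩ := exists_neg_left (x := fun t => -x t) hx.neg (by linarith) (by simp [h0]) hcu
  exact ⟨t, ht, by linarith [h]⟩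

-- a periodic function with nonpositive derivative is constant
lemma periodic_const_of_deriv_nonpos {yy d : ℝ → ℝ} (hy : ∀ t, HasDerivAt yy (d t) t)
    (hd : ∀ t, d t ≤ 0) {T : ℝ} (hT : 0 < T) (hp : Function.Periodic yy T) :
    ∀ s t, yy s = yy t := by
  have hdiff : Differentiable ℝ yy := fun t => (hy t).differentiableAt
  have hanti : Antitone yy := by
    apply antitone_of_deriv_nonpos hdiff
    intro t; rw [(hy t).deriv]; exact hd t
  have key : ∀ s t : ℝ, s ≤ t → yy s = yy t := by
    intro s t hst
    obtain ⟨k, hk⟩ := exists_nat_gt ((t - s) / T)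
    have hkT : t ≤ s + k * T := by
      have := (div_lt_iff₀ hT).1 hk
      linarith
    have h1 : yy t ≤ yy s := hanti hst
    have h2 : yy (s + k * T) ≤ yy t := hanti hkT
    have h3 : yy (s + k * T) = yy s := by
      have := hp.nat_mul k (x := s)
      simpa [add_comm, mul_comm] using this
    linarith
  intro s t
  rcases le_total s t with h | h
  · exact key s t h
  · exact (key t s h).symm

-- zeros of x are "isolated" near a; next zero exists
lemma next_zero {x : ℝ → ℝ} (hxc : Continuous x) {a T : ℝ} (hT : 0 < T)
    (hz : x (a + T) = 0) (hne : ∀ᶠ t in 𝓝[≠] a, x t ≠ 0) :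
    ∃ b, a < b ∧ x b = 0 ∧ ∀ t ∈ Ioo a b, x t ≠ 0 := by
  have hne2 : ∀ᶠ t in 𝓝 a, t ≠ a → x t ≠ 0 := by
    have := eventually_nhdsWithin_iff.1 hne
    filter_upwards [this] with t ht h using ht h
  obtain ⟨ε, hε, hball⟩ := Metric.eventually_nhds_iff.1 hne2
  set δ := min (ε / 2) T with hδ
  have hδ0 : 0 < δ := lt_min (half_pos hε) hT
  have hδε : δ < ε := lt_of_le_of_lt (min_le_left _ _) (half_lt_self hε)
  have hne' : ∀ t ∈ Ioc a (a + δ), x t ≠ 0 := by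
    intro t ht
    refine hball ?_ (ne_of_gt ht.1)
    rw [Real.dist_eq, abs_lt]
    constructor <;> [linarith [ht.1, hδ0]; linarith [ht.2, hδε]]
  set S := {t : ℝ | x t = 0} ∩ Icc (a + δ) (a + T) with hS
  have hSclosed : IsClosed S := (isClosed_eq hxc continuous_const).inter isClosed_Icc
  have hSne : S.Nonempty := ⟨a + T, hz, ⟨by linarith [min_le_right (ε/2) T], le_rfl⟩⟩
  have hSbdd : BddBelow S := ⟨a, fun t ht => by linarith [ht.2.1, hδ0]⟩
  set b := sInf S with hb
  have hbS : b ∈ S := hSclosed.csInf_mem hSne hSbdd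
  refine ⟨b, by linarith [hbS.2.1], hbS.1, ?_⟩
  intro t ht
  rcases le_or_gt t (a + δ) with h | h
  · exact hne' t ⟨ht.1, h⟩
  · intro h0
    have : t ∈ S := ⟨h0, ⟨le_of_lt h, by linarith [hbS.2.2, ht.2]⟩⟩
    exact absurd (csInf_le hSbdd this) (not_le.2 ht.2)

lemma prev_zero {x : ℝ → ℝ} (hxc : Continuous x) {a T : ℝ} (hT : 0 < T)
    (hz : x (a - T) = 0) (hne : ∀ᶠ t in 𝓝[≠] a, x t ≠ 0) :
    ∃ c, c < a ∧ x c = 0 ∧ ∀ t ∈ Ioo c a, x t ≠ 0 := by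
  have hmaps : Tendsto (fun t : ℝ => -t) (𝓝[≠] (-a)) (𝓝[≠] a) := by
    apply Tendsto.inf
    · have : Tendsto (fun t : ℝ => -t) (𝓝 (-a)) (𝓝 (-(-a))) := tendsto_neg (-a)
      simpa using this
    · refine tendsto_principal_principal.2 (fun t ht => ?_)
      simp only [mem_compl_iff, mem_singleton_iff] at *
      intro h; exact ht (by linarith)
  have hne' : ∀ᶠ t in 𝓝[≠] (-a), x (-t) ≠ 0 := hmaps.eventually hne
  obtain ⟨b, hab, hb0, hbne⟩ := next_zero (hxc.comp continuous_neg) hT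
    (show x (-(-a + T)) = 0 by rw [show -(-a + T) = a - T by ring]; exact hz) hne'
  refine ⟨-b, by linarith, hb0, ?_⟩
  intro t ht
  have := hbne (-t) ⟨by linarith [ht.2], by linarith [ht.1]⟩
  simpa using this

lemma sol_unique {f g F : ℝ → ℝ} (hf : Continuous f) (hglip : LocallyLipschitz g)
    (hF : ∀ x, F x = ∫ u in (0:ℝ)..x, f u) {x₁ y₁ x₂ y₂ : ℝ → ℝ}
    (h₁ : IsSolution F g x₁ y₁) (h₂ : IsSolution F g x₂ y₂) {t₀ : ℝ}
    (hx0 : x₁ t₀ = x₂ t₀) (hy0 : y₁ t₀ = y₂ t₀) : ∀ t, x₁ t = x₂ t ∧ y₁ t = y₂ t := by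
  have hFd : ∀ z, HasDerivAt F (f z) z := by
    intro z
    have := intervalIntegral.integral_hasDerivAt_right (f := f) (a := (0:ℝ)) (b := z)
      (hf.intervalIntegrable _ _) (hf.stronglyMeasurableAtFilter _ _) hf.continuousAt
    have heq : F = fun z => ∫ u in (0:ℝ)..z, f u := funext hF
    rw [heq]; exact this
  have hFl : LocallyLipschitz F := by
    apply ContDiff.locallyLipschitz (𝕂 := ℝ)
    rw [contDiff_one_iff_deriv]
    exact ⟨fun z => (hFd z).differentiableAt, by rw [funext fun z => (hFd z).deriv]; exact hf⟩
  set V : ℝ × ℝ → ℝ × ℝ := fun p => (p.2 - F p.1, -(g p.1)) with hV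
  have hVl : LocallyLipschitz V := by
    have h1 : LocallyLipschitz (fun p : ℝ × ℝ => p.2 - F p.1) :=
      LocallyLipschitz.sub (LipschitzWith.locallyLipschitz LipschitzWith.prod_snd)
        (hFl.comp (LipschitzWith.locallyLipschitz LipschitzWith.prod_fst))
    have h2 : LocallyLipschitz (fun p : ℝ × ℝ => -(g p.1)) :=
      (hglip.comp (LipschitzWith.locallyLipschitz LipschitzWith.prod_fst)).neg
    exact h1.prodMk h2
  have key := ode_unique (v := V) hVl (γ₁ := fun t => (x₁ t, y₁ t)) (γ₂ := fun t => (x₂ t, y₂ t))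
    (fun t => ((h₁ t).1.prodMk (h₁ t).2)) (fun t => ((h₂ t).1.prodMk (h₂ t).2))
    (t₀ := t₀) (show (x₁ t₀, y₁ t₀) = (x₂ t₀, y₂ t₀) by rw [hx0, hy0])
  intro t
  have := key t
  exact ⟨congrArg Prod.fst this, congrArg Prod.snd this⟩

lemma refl_sol {g F : ℝ → ℝ} (hFodd : ∀ x, F (-x) = -F x) (hgodd : ∀ x, g (-x) = -g x)
    {x y : ℝ → ℝ} (hsol : IsSolution F g x y) (Δ : ℝ) :
    IsSolution F g (fun τ => -x (τ + Δ)) (fun τ => -y (τ + Δ)) := by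
  intro t
  constructor
  · have h1 : HasDerivAt (fun τ => x (τ + Δ)) (y (t + Δ) - F (x (t + Δ))) t :=
      HasDerivAt.comp_add_const t Δ (hsol (t + Δ)).1
    have h2 := h1.fun_neg
    refine h2.congr_deriv ?_
    rw [hFodd]
    ring
  · have h1 : HasDerivAt (fun τ => y (τ + Δ)) (-(g (x (t + Δ)))) t :=
      HasDerivAt.comp_add_const t Δ (hsol (t + Δ)).2
    have h2 := h1.fun_neg
    refine h2.congr_deriv ?_
    rw [hgodd]

-- constant sign on an interval without zeros
lemma sign_const_pos {x : ℝ → ℝ} (hxc : Continuous x) {a b : ℝ}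
    (hne : ∀ t ∈ Ioo a b, x t ≠ 0) {t' : ℝ} (ht' : t' ∈ Ioo a b) (hpos : 0 < x t') :
    ∀ t ∈ Ioo a b, 0 < x t := by
  intro t ht
  by_contra h
  have hneg : x t < 0 := lt_of_le_of_ne (not_lt.1 h) (hne t ht)
  rcases le_total t t' with hle | hle
  · obtain ⟨s, hs, hxs⟩ := intermediate_value_Icc hle (hxc.continuousOn) ⟨hneg.le, hpos.le⟩
    have : s ∈ Ioo a b := ⟨lt_of_lt_of_le ht.1 hs.1, lt_of_le_of_lt hs.2 ht'.2⟩
    exact hne s this hxs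
  · obtain ⟨s, hs, hxs⟩ := intermediate_value_Icc' hle (hxc.continuousOn) ⟨hneg.le, hpos.le⟩
    have : s ∈ Ioo a b := ⟨lt_of_lt_of_le ht'.1 hs.1, lt_of_le_of_lt hs.2 ht.2⟩
    exact hne s this hxs

lemma sign_const_neg {x : ℝ → ℝ} (hxc : Continuous x) {a b : ℝ}
    (hne : ∀ t ∈ Ioo a b, x t ≠ 0) {t' : ℝ} (ht' : t' ∈ Ioo a b) (hneg : x t' < 0) :
    ∀ t ∈ Ioo a b, x t < 0 := by
  intro t ht
  have := sign_const_pos (x := fun t => -x t) hxc.neg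
    (fun s hs => by simpa using hne s hs) ht' (by simpa using hneg) t ht
  simpa using this

/-- For an odd Lienard system, every closed orbit is symmetric about the origin. -/
theorem lienard_orbit_symmetric (f g F : ℝ → ℝ)
    (hf : Continuous f) (hg : Continuous g) (hglip : LocallyLipschitz g)
    (hF : ∀ x, F x = ∫ u in (0:ℝ)..x, f u)
    (hFodd : ∀ x, F (-x) = -F x) (hgodd : ∀ x, g (-x) = -g x)
    (hgpos : ∀ x, 0 < x → 0 < g x)
    (x y : ℝ → ℝ) (hsol : IsSolution F g x y)
    (T : ℝ) (hT : 0 < T)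
    (hxp : Function.Periodic x T) (hyp : Function.Periodic y T)
    (hnc : ∃ t₁ t₂ : ℝ, x t₁ ≠ x t₂ ∨ y t₁ ≠ y t₂)
    (p q : ℝ) :
    (p, q) ∈ Set.range (fun t => (x t, y t)) ↔
      (-p, -q) ∈ Set.range (fun t => (x t, y t)) := by
  have hx' : ∀ t, HasDerivAt x (y t - F (x t)) t := fun t => (hsol t).1
  have hy' : ∀ t, HasDerivAt y (-(g (x t))) t := fun t => (hsol t).2
  have hxc : Continuous x := continuous_iff_continuousAt.2 fun t => (hx' t).continuousAt
  have hyc : Continuous y := continuous_iff_continuousAt.2 fun t => (hy' t).continuousAt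
  have hF0 : F 0 = 0 := by rw [hF]; simp
  have hg0 : g 0 = 0 := by have := hgodd 0; simp at this; linarith
  have hgneg : ∀ z, z < 0 → g z < 0 := by
    intro z hz
    have h1 : 0 < g (-z) := hgpos _ (by linarith)
    have h2 : g (-(-z)) = - g (-z) := hgodd (-z)
    rw [neg_neg] at h2; linarith
  have hgzero : ∀ z, g z = 0 → z = 0 := by
    intro z hz
    rcases lt_trichotomy z 0 with h | h | h
    · exact absurd hz (ne_of_lt (hgneg z h))
    · exact h
    · exact absurd hz (ne_of_gt (hgpos z h))
  have horigin : ∀ t, x t = 0 → y t ≠ 0 := by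
    intro t hxt hyt
    have hzero : IsSolution F g (fun _ => 0) (fun _ => 0) := by
      intro s
      constructor
      · simpa [hF0] using (hasDerivAt_const s (0:ℝ))
      · simpa [hg0] using (hasDerivAt_const s (0:ℝ))
    have := sol_unique hf hglip hF hsol hzero (t₀ := t) hxt hyt
    obtain ⟨t₁, t₂, hne⟩ := hnc
    rcases hne with h | h
    · exact h (by rw [(this t₁).1, (this t₂).1])
    · exact h (by rw [(this t₁).2, (this t₂).2])
  have hnotconstx : ¬ (∀ t, x t = 0) := by
    intro hall
    have hx0 : HasDerivAt x 0 0 := by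
      have : x = fun _ => 0 := funext hall
      rw [this]; exact hasDerivAt_const 0 0
    have h2 := (hx' 0).unique hx0
    rw [hall 0, hF0, sub_zero] at h2
    exact horigin 0 (hall 0) h2
  have hyconst_aux : (∀ s t : ℝ, y s = y t) → False := by
    intro hconst
    have hgx0 : ∀ t, g (x t) = 0 := by
      intro t
      have h1 : HasDerivAt y 0 t := by
        have : y = fun _ => y 0 := funext (fun t => hconst t 0)
        rw [this]; exact hasDerivAt_const t (y 0)
      have := (hy' t).unique h1
      linarith
    exact hnotconstx fun t => hgzero _ (hgx0 t)
  have hxpos : ∃ t, 0 < x t := by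
    by_contra h
    push_neg at h
    have hd : ∀ t, g (x t) ≤ 0 := by
      intro t
      rcases lt_or_eq_of_le (h t) with h' | h'
      · exact (hgneg _ h').le
      · rw [h', hg0]
    have hconst := periodic_const_of_deriv_nonpos (yy := fun t => -y t)
      (d := fun t => g (x t)) (fun t => by simpa using (hy' t).fun_neg) hd hT
      (by intro s; simp [hyp s])
    exact hyconst_aux (fun s t => by have h5 : -y s = -y t := hconst s t; linarith)
  have hxneg : ∃ t, x t < 0 := by
    by_contra h
    push_neg at h
    have hd : ∀ t, -(g (x t)) ≤ 0 := by
      intro t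
      rcases lt_or_eq_of_le (h t) with h' | h'
      · have := hgpos _ h'; linarith
      · rw [← h', hg0]; simp
    have hconst := periodic_const_of_deriv_nonpos hy' hd hT hyp
    exact hyconst_aux hconst
  -- derivative of x at a zero of x is y
  have hdxat : ∀ t, x t = 0 → HasDerivAt x (y t) t := fun t ht => by
    have := hx' t; rwa [ht, hF0, sub_zero] at this
  -- an upward crossing exists
  have hupcross : ∃ u, x u = 0 ∧ 0 < y u := by
    obtain ⟨sn, hsn⟩ := hxneg
    obtain ⟨sp, hsp⟩ := hxpos
    obtain ⟨k, hk⟩ := exists_nat_gt ((sn - sp) / T)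
    set sp' := sp + k * T with hsp'
    have hsp'pos : 0 < x sp' := by
      rw [hsp', show sp + (k:ℝ) * T = sp + (k:ℝ) * T from rfl]
      have : x (sp + (k:ℝ) * T) = x sp := by
        have := (hxp.nat_mul k) (x := sp)
        simpa [mul_comm] using this
      rw [this]; exact hsp
    have hlt : sn < sp' := by
      have := (div_lt_iff₀ hT).1 hk
      simp only [hsp']
      linarith
    set S := Icc sn sp' ∩ {t | x t ≤ 0} with hS
    have hSc : IsClosed S := isClosed_Icc.inter (isClosed_le hxc continuous_const)
    have hSne : S.Nonempty := ⟨sn, ⟨le_rfl, hlt.le⟩, hsn.le⟩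
    have hSbdd : BddAbove S := ⟨sp', fun t ht => ht.1.2⟩
    set u := sSup S with hu
    have huS : u ∈ S := hSc.csSup_mem hSne hSbdd
    have hune : u ≠ sp' := fun hh => by
      rw [hh] at huS; exact absurd huS.2 (not_le.2 hsp'pos)
    have hult : u < sp' := lt_of_le_of_ne huS.1.2 hune
    have hpos : ∀ t ∈ Ioc u sp', 0 ≤ x t := by
      intro t ht
      by_contra hcon
      have : t ∈ S := ⟨⟨le_trans huS.1.1 ht.1.le, ht.2⟩, (not_le.1 hcon).le⟩
      exact absurd (le_csSup hSbdd this) (not_le.2 ht.1)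
    have hxu : x u = 0 := by
      refine le_antisymm huS.2 ?_
      have htd : Tendsto x (𝓝[>] u) (𝓝 (x u)) := (hxc.tendsto u).mono_left nhdsWithin_le_nhds
      refine ge_of_tendsto htd ?_
      filter_upwards [Ioc_mem_nhdsGT_of_mem ⟨le_rfl, hult⟩] with t ht using hpos t ht
    have hyu : 0 ≤ y u := deriv_nonneg_of_right (hdxat u hxu) hult hxu hpos
    exact ⟨u, hxu, lt_of_le_of_ne hyu (Ne.symm (horigin u hxu))⟩
  obtain ⟨u, hxu, hyu⟩ := hupcross
  -- global max of y
  have hmax : ∃ t₀, ∀ t, y t ≤ y t₀ := by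
    obtain ⟨t₀, ht₀I, ht₀⟩ := isCompact_Icc.exists_isMaxOn (nonempty_Icc.2 hT.le)
      hyc.continuousOn
    refine ⟨t₀, fun t => ?_⟩
    have h1 : t - ⌊t/T⌋ * T ∈ Icc 0 T :=
      ⟨Int.sub_floor_div_mul_nonneg t hT, (Int.sub_floor_div_mul_lt t hT).le⟩
    have h2 : y (t - ⌊t/T⌋ * T) = y t := hyp.sub_int_mul_eq ⌊t/T⌋
    calc y t = y (t - ⌊t/T⌋ * T) := h2.symm
    _ ≤ y t₀ := ht₀ h1
  obtain ⟨t₀, hM⟩ := hmax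
  have hxt₀ : x t₀ = 0 := by
    have hloc : IsLocalMax y t₀ := Filter.Eventually.of_forall hM
    have h1 := hloc.hasDerivAt_eq_zero (hy' t₀)
    exact hgzero _ (by linarith)
  have hMpos : 0 < y t₀ := lt_of_lt_of_le hyu (hM u)
  -- eventual nonvanishing near zeros
  have hev : ∀ t, x t = 0 → ∀ᶠ s in 𝓝[≠] t, x s ≠ 0 := by
    intro t ht
    have := (hdxat t ht).eventually_ne (c := x t) (horigin t ht)
    filter_upwards [this] with s hs
    rwa [ht] at hs
  -- arc lemmas
  have IccPos : ∀ a b : ℝ, x a = 0 → x b = 0 → (∀ t ∈ Ioo a b, 0 < x t) →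
      ∀ t ∈ Icc a b, 0 ≤ x t := by
    intro a b ha hb hpos t ht
    rcases eq_or_lt_of_le ht.1 with h | h
    · rw [← h, ha]
    rcases eq_or_lt_of_le ht.2 with h' | h'
    · rw [h', hb]
    · exact (hpos t ⟨h, h'⟩).le
  have IccNeg : ∀ a b : ℝ, x a = 0 → x b = 0 → (∀ t ∈ Ioo a b, x t < 0) →
      ∀ t ∈ Icc a b, x t ≤ 0 := by
    intro a b ha hb hneg t ht
    rcases eq_or_lt_of_le ht.1 with h | h
    · rw [← h, ha]
    rcases eq_or_lt_of_le ht.2 with h' | h'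
    · rw [h', hb]
    · exact (hneg t ⟨h, h'⟩).le
  have arcP : ∀ a b : ℝ, a < b → x a = 0 → x b = 0 → (∀ t ∈ Ioo a b, 0 < x t) →
      StrictAntiOn y (Icc a b) ∧ 0 < y a ∧ y b < 0 := by
    intro a b hab ha hb hpos
    refine ⟨?_, ?_, ?_⟩
    · apply strictAntiOn_of_deriv_neg (convex_Icc a b) hyc.continuousOn
      intro t ht
      rw [interior_Icc] at ht
      rw [(hy' t).deriv]
      have := hgpos _ (hpos t ht)
      linarith
    · have h1 : ∀ t ∈ Ioc a b, 0 ≤ x t := fun t ht => IccPos a b ha hb hpos t ⟨ht.1.le, ht.2⟩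
      have := deriv_nonneg_of_right (hdxat a ha) hab ha h1
      exact lt_of_le_of_ne this (Ne.symm (horigin a ha))
    · have h1 : ∀ t ∈ Ico a b, 0 ≤ x t := fun t ht => IccPos a b ha hb hpos t ⟨ht.1, ht.2.le⟩
      have := deriv_nonpos_of_left (hdxat b hb) hab hb h1
      exact lt_of_le_of_ne this (horigin b hb)
  have arcN : ∀ a b : ℝ, a < b → x a = 0 → x b = 0 → (∀ t ∈ Ioo a b, x t < 0) →
      StrictMonoOn y (Icc a b) ∧ y a < 0 ∧ 0 < y b := by
    intro a b hab ha hb hneg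
    refine ⟨?_, ?_, ?_⟩
    · apply strictMonoOn_of_deriv_pos (convex_Icc a b) hyc.continuousOn
      intro t ht
      rw [interior_Icc] at ht
      rw [(hy' t).deriv]
      have := hgneg _ (hneg t ht)
      linarith
    · have h1 : ∀ t ∈ Ioc a b, x t ≤ 0 := fun t ht => IccNeg a b ha hb hneg t ⟨ht.1.le, ht.2⟩
      have := deriv_nonpos_of_right (hdxat a ha) hab ha h1
      exact lt_of_le_of_ne this (horigin a ha)
    · have h1 : ∀ t ∈ Ico a b, x t ≤ 0 := fun t ht => IccNeg a b ha hb hneg t ⟨ht.1, ht.2.le⟩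
      have := deriv_nonneg_of_left (hdxat b hb) hab hb h1
      exact lt_of_le_of_ne this (Ne.symm (horigin b hb))
  -- consecutive zeros around t₀
  obtain ⟨t₁, ht01, hxt₁, hne01⟩ := next_zero hxc hT
    (by rw [hxp t₀]; exact hxt₀) (hev t₀ hxt₀)
  have hpos01 : ∀ t ∈ Ioo t₀ t₁, 0 < x t := by
    obtain ⟨t', ht', hx'p⟩ := exists_pos_right (hdxat t₀ hxt₀) hMpos hxt₀ ht01
    exact sign_const_pos hxc hne01 ht' hx'p
  obtain ⟨hanti1, hc1, hd1⟩ := arcP t₀ t₁ ht01 hxt₀ hxt₁ hpos01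
  obtain ⟨t₂, ht12, hxt₂, hne12⟩ := next_zero hxc hT
    (by rw [hxp t₁]; exact hxt₁) (hev t₁ hxt₁)
  have hneg12 : ∀ t ∈ Ioo t₁ t₂, x t < 0 := by
    obtain ⟨t', ht', hx'p⟩ := exists_neg_right (hdxat t₁ hxt₁) hd1 hxt₁ ht12
    exact sign_const_neg hxc hne12 ht' hx'p
  obtain ⟨hmono2, -, hc2⟩ := arcN t₁ t₂ ht12 hxt₁ hxt₂ hneg12
  obtain ⟨s₁, hs10, hxs₁, hnes1⟩ := prev_zero hxc hT
    (by rw [hxp.sub_eq t₀]; exact hxt₀) (hev t₀ hxt₀)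
  have hnegs1 : ∀ t ∈ Ioo s₁ t₀, x t < 0 := by
    obtain ⟨t', ht', hx'p⟩ := exists_neg_left (hdxat t₀ hxt₀) hMpos hxt₀ hs10
    exact sign_const_neg hxc hnes1 ht' hx'p
  obtain ⟨hmono0, hd0, -⟩ := arcN s₁ t₀ hs10 hxs₁ hxt₀ hnegs1
  obtain ⟨s₂, hs21, hxs₂, hnes2⟩ := prev_zero hxc hT
    (by rw [hxp.sub_eq s₁]; exact hxs₁) (hev s₁ hxs₁)
  have hposs2 : ∀ t ∈ Ioo s₂ s₁, 0 < x t := by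
    obtain ⟨t', ht', hx'p⟩ := exists_pos_left (hdxat s₁ hxs₁) hd0 hxs₁ hs21
    exact sign_const_pos hxc hnes2 ht' hx'p
  obtain ⟨hanti0, hc0, -⟩ := arcP s₂ s₁ hs21 hxs₂ hxs₁ hposs2
  -- main existence of a symmetric pair of points
  have hexists : ∃ t s, x t = -x s ∧ y t = -y s := by
    have hR1 := IccPos t₀ t₁ hxt₀ hxt₁ hpos01
    have hL1 := IccNeg t₁ t₂ hxt₁ hxt₂ hneg12
    have hL0 := IccNeg s₁ t₀ hxs₁ hxt₀ hnegs1
    have hR0 := IccPos s₂ s₁ hxs₂ hxs₁ hposs2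
    by_cases h1 : 0 ≤ (y t₀ + y t₁) * (y t₁ + y t₂)
    · exact cross hxc hyc ht01.le ht12.le hxt₀ hxt₁ hxt₁ hxt₂ hR1 hL1
        hanti1 hmono2 hMpos hd1 hd1 hc2 h1
    by_cases h2 : 0 ≤ (y t₀ + y s₁) * (y t₁ + y t₀)
    · exact cross hxc hyc ht01.le hs10.le hxt₀ hxt₁ hxs₁ hxt₀ hR1 hL0
        hanti1 hmono0 hMpos hd1 hd0 hMpos h2
    · push_neg at h1 h2
      have hgood3 : 0 ≤ (y s₂ + y s₁) * (y s₁ + y t₀) := by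
        have hc2M : y t₂ ≤ y t₀ := hM t₂
        have hc0M : y s₂ ≤ y t₀ := hM s₂
        have hf1 : 0 < y t₀ + y t₁ := by
          rcases mul_neg_iff.1 h1 with ⟨ha, hb⟩ | ⟨ha, hb⟩
          · exact ha
          · linarith
        have hf2 : y t₀ + y s₁ < 0 := by
          rcases mul_neg_iff.1 h2 with ⟨ha, hb⟩ | ⟨ha, hb⟩
          · linarith
          · exact ha
        have : y s₂ + y s₁ < 0 := by linarith
        have : 0 < (y s₂ + y s₁) * (y s₁ + y t₀) :=
          mul_pos_of_neg_of_neg this (by linarith)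
        linarith
      exact cross hxc hyc hs21.le hs10.le hxs₂ hxs₁ hxs₁ hxt₀ hR0 hL0
        hanti0 hmono0 hc0 hd0 hd0 hMpos hgood3
  obtain ⟨ta, sa, hxa, hya⟩ := hexists
  set Δ := sa - ta with hΔ
  have hrefl := refl_sol hFodd hgodd hsol Δ
  have hkey := sol_unique hf hglip hF hsol hrefl (t₀ := ta)
    (show x ta = -x (ta + Δ) by rw [show ta + Δ = sa by rw [hΔ]; ring]; exact hxa)
    (show y ta = -y (ta + Δ) by rw [show ta + Δ = sa by rw [hΔ]; ring]; exact hya)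
  constructor
  · rintro ⟨τ, hτ⟩
    refine ⟨τ + Δ, ?_⟩
    have hp' : x τ = p := congrArg Prod.fst hτ
    have hq' : y τ = q := congrArg Prod.snd hτ
    have h1 := (hkey τ).1
    have h2 := (hkey τ).2
    show (x (τ + Δ), y (τ + Δ)) = (-p, -q)
    rw [Prod.mk.injEq]
    constructor <;> linarith
  · rintro ⟨τ, hτ⟩
    refine ⟨τ + Δ, ?_⟩
    have hp' : x τ = -p := congrArg Prod.fst hτ
    have hq' : y τ = -q := congrArg Prod.snd hτ
    have h1 := (hkey τ).1
    have h2 := (hkey τ).2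
    show (x (τ + Δ), y (τ + Δ)) = (p, q)
    rw [Prod.mk.injEq]
    constructor <;> linarith
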